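/- With the qubit composition law: if μ₁,ε₁,μ₂,ε₂ ∈ [0,1] and |cᵢ|² ≤ (1−εᵢμᵢ)(1−μᵢ) for i=1,2, then |c₁c₂|² ≤ (1−ε₃μ₃)(1−μ₃), i.e., the thermal-operation constraint is preserved under composition. -/

import Mathlib

/-- The thermal-operation constraint is preserved under the qubit composition law:
if `μ₁,ε₁,μ₂,ε₂ ∈ [0,1]` and `|cᵢ|² ≤ (1−εᵢμᵢ)(1−μᵢ)` for `i = 1,2`, then
`|c₁c₂|² ≤ (1−ε₃μ₃)(1−μ₃)`. -/
theorem stmt_17 (μ₁ ε₁ μ₂ ε₂ : ℝ) (c₁ c₂ : ℂ)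
    (hμ₁ : μ₁ ∈ Set.Icc (0:ℝ) 1) (hε₁ : ε₁ ∈ Set.Icc (0:ℝ) 1)
    (hμ₂ : μ₂ ∈ Set.Icc (0:ℝ) 1) (hε₂ : ε₂ ∈ Set.Icc (0:ℝ) 1)
    (hc₁ : ‖c₁‖ ^ 2 ≤ (1 - ε₁ * μ₁) * (1 - μ₁))
    (hc₂ : ‖c₂‖ ^ 2 ≤ (1 - ε₂ * μ₂) * (1 - μ₂)) :
    ‖c₁ * c₂‖ ^ 2 ≤
      (1 - (ε₁ * μ₁ + ε₂ * μ₂ - μ₁ * μ₂ * (1 + ε₁) * ε₂)) *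
        (1 - (μ₁ + μ₂ - μ₁ * μ₂ * (1 + ε₁))) := by
  obtain ⟨h1, h2⟩ := hμ₁; obtain ⟨h3, h4⟩ := hε₁
  obtain ⟨h5, h6⟩ := hμ₂; obtain ⟨h7, h8⟩ := hε₂
  rw [norm_mul, mul_pow]
  have a1 : (0:ℝ) ≤ ‖c₁‖ ^ 2 := sq_nonneg _
  have a2 : (0:ℝ) ≤ ‖c₂‖ ^ 2 := sq_nonneg _
  have p1 : (0:ℝ) ≤ (1 - ε₂ * μ₂) * (1 - μ₂) := le_trans a2 hc₂
  have step : ‖c₁‖ ^ 2 * ‖c₂‖ ^ 2 ≤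
      ((1 - ε₁ * μ₁) * (1 - μ₁)) * ((1 - ε₂ * μ₂) * (1 - μ₂)) := by
    exact mul_le_mul hc₁ hc₂ a2 (le_trans a1 hc₁)
  refine step.trans ?_
  have e1 : (1 - (ε₁ * μ₁ + ε₂ * μ₂ - μ₁ * μ₂ * (1 + ε₁) * ε₂)) =
      (1 - ε₁*μ₁)*(1 - ε₂*μ₂) + μ₁*μ₂*ε₂ := by ring
  have e2 : (1 - (μ₁ + μ₂ - μ₁ * μ₂ * (1 + ε₁))) = (1 - μ₁)*(1 - μ₂) + μ₁*μ₂*ε₁ := by ring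
  rw [e1, e2]
  have nA : (0:ℝ) ≤ (1 - ε₁*μ₁)*(1 - ε₂*μ₂) :=
    mul_nonneg (sub_nonneg.2 (mul_le_one₀ h4 h1 h2)) (sub_nonneg.2 (mul_le_one₀ h8 h5 h6))
  have nB : (0:ℝ) ≤ (1 - μ₁)*(1 - μ₂) :=
    mul_nonneg (sub_nonneg.2 h2) (sub_nonneg.2 h6)
  have na : (0:ℝ) ≤ μ₁*μ₂*ε₂ := mul_nonneg (mul_nonneg h1 h5) h7
  have nb : (0:ℝ) ≤ μ₁*μ₂*ε₁ := mul_nonneg (mul_nonneg h1 h5) h3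
  calc (1 - ε₁ * μ₁) * (1 - μ₁) * ((1 - ε₂ * μ₂) * (1 - μ₂))
      = (1 - ε₁*μ₁)*(1 - ε₂*μ₂) * ((1 - μ₁)*(1 - μ₂)) := by ring
    _ ≤ ((1 - ε₁*μ₁)*(1 - ε₂*μ₂) + μ₁*μ₂*ε₂) * ((1 - μ₁)*(1 - μ₂) + μ₁*μ₂*ε₁) := by
        apply mul_le_mul (by linarith) (by linarith) nB (by linarith)
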